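/- Let F be a field and let L be a left Leibniz algebra over F with dim_F L = 3 which is not a Lie algebra. Assume Leib(L) ⊆ ζ(L), dim_F Leib(L) = 1, and L/Leib(L) is abelian. Then there exists a basis (a1, a2, a3) of L such that the bracket is given by one of the following multiplication tables (all brackets of basis vectors not listed being zero): (i) [a1,a1] = a3; (ii) [a1,a1] = [a1,a2] = a3; (iii) [a1,a1] = [a2,a1] = a3; (iv) [a1,a1] = [a2,a1] = a3 and [a1,a2] = α·a3 for some α ∈ F, α ≠ 0; (v) [a1,a1] = a3 and [a2,a2] = β·a3 for some β ∈ F with β ≠ 0 and x² + β ≠ 0 for all x ∈ F; (vi) [a1,a1] = a3, [a1,a2] = α·a3, [a2,a2] = β·a3 for some α, β ∈ F with α ≠ 0, β ≠ 0 and x² + αx + β ≠ 0 for all x ∈ F; (vii) [a1,a1] = [a2,a1] = a3 and [a2,a2] = σ·a3 for some σ ∈ F with σ ≠ 0 and x² + x + σ ≠ 0 for all x ∈ F; (viii) [a1,a1] = [a2,a1] = a3, [a1,a2] = τ·a3, [a2,a2] = σ·a3 for some τ, σ ∈ F with τ ≠ 0, σ ≠ 0 and x² + (τ+1)x + σ ≠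 0 for all x ∈ F. -/

import Mathlib

open Module Polynomial

variable {F L : Type*} [Field F] [AddCommGroup L] [Module F L]

/-- The left Leibniz identity for a bilinear bracket. -/
def IsLeibniz (β : L →ₗ[F] L →ₗ[F] L) : Prop :=
  ∀ a b c : L, β (β a b) c = β a (β b c) - β b (β a c)

/-- The Leibniz kernel `Leib(L)`: the subspace spanned by all squares `[a,a]`. -/
def leibKer (β : L →ₗ[F] L →ₗ[F] L) : Submodule F L :=
  Submodule.span F (Set.range fun a => β a a)

/-- The center `ζ(L)` of a Leibniz algebra. -/
def lzCenter (β : L →ₗ[F] L →ₗ[F] L) : Submodule F L where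
  carrier := {x | ∀ y, β x y = 0 ∧ β y x = 0}
  add_mem' := by
    intro a b ha hb y
    refine ⟨?_, ?_⟩
    · rw [map_add, LinearMap.add_apply, (ha y).1, (hb y).1, add_zero]
    · rw [map_add, (ha y).2, (hb y).2, add_zero]
  zero_mem' := by
    intro y
    refine ⟨?_, ?_⟩ <;> simp
  smul_mem' := by
    intro c a ha y
    refine ⟨?_, ?_⟩
    · rw [map_smul, LinearMap.smul_apply, (ha y).1, smul_zero]
    · rw [map_smul, (ha y).2, smul_zero]

/-- The derived subalgebra `[L,L]`. -/
def leibDerived (β : L →ₗ[F] L →ₗ[F] L) : Submodule F L :=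
  Submodule.span F {x | ∃ a b : L, β a b = x}

/-- The lower central series: `leibGamma β 1 = ⊤`, `leibGamma β (k+1) = [L, leibGamma β k]`. -/
def leibGamma (β : L →ₗ[F] L →ₗ[F] L) : ℕ → Submodule F L
  | 0 => ⊤
  | 1 => ⊤
  | (n+2) => Submodule.span F {x | ∃ a b : L, b ∈ leibGamma β (n+1) ∧ β a b = x}

/-- The derived series: `leibDelta β 0 = ⊤`, `leibDelta β (n+1) = [leibDelta β n, leibDelta β n]`. -/
def leibDelta (β : L →ₗ[F] L →ₗ[F] L) : ℕ → Submodule F L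
  | 0 => ⊤
  | (n+1) => Submodule.span F
      {x | ∃ a ∈ leibDelta β n, ∃ b ∈ leibDelta β n, β a b = x}

/-- Multiplication table predicate: the brackets of the triple `a` are given by `t`. -/
def MulTbl (β : L →ₗ[F] L →ₗ[F] L) (a : Fin 3 → L) (t : Fin 3 → Fin 3 → L) : Prop :=
  ∀ i j, β (a i) (a j) = t i j

section Helpers
variable {F L : Type*} [Field F] [AddCommGroup L] [Module F L]

private lemma li_change {a1 a2 a3 : L} (h : LinearIndependent F ![a1, a2, a3]) (s t : F)
    (hs : s ≠ 0) : LinearIndependent F ![a1, s • a2 + t • a1, a3] := by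
  rw [Fintype.linearIndependent_iff] at h ⊢
  intro g hg
  have hg' : ∑ i, (![g 0 + g 1 * t, g 1 * s, g 2]) i • (![a1, a2, a3]) i = 0 := by
    rw [Fin.sum_univ_three] at hg ⊢
    simp only [Matrix.cons_val_zero, Matrix.cons_val_one, Matrix.head_cons,
      Matrix.cons_val_two, Matrix.tail_cons] at hg ⊢
    rw [← hg]; module
  have h1' : g 1 = 0 := by
    rcases mul_eq_zero.mp (h _ hg' 1) with h | h
    · exact h
    · exact absurd h hs
  have h0 : g 0 + g 1 * t = 0 := h _ hg' 0
  intro i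
  fin_cases i
  · simpa [h1'] using h0
  · exact h1'
  · exact h _ hg' 2

private lemma li_perm {x y z : L} (h : LinearIndependent F ![x, y, z]) :
    LinearIndependent F ![x, z, y] := by
  rw [Fintype.linearIndependent_iff] at h ⊢
  intro g hg
  have hg' : ∑ i, (![g 0, g 2, g 1]) i • (![x, y, z]) i = 0 := by
    rw [Fin.sum_univ_three] at hg ⊢
    simp only [Matrix.cons_val_zero, Matrix.cons_val_one, Matrix.head_cons,
      Matrix.cons_val_two, Matrix.tail_cons] at hg ⊢
    rw [← hg]; module
  intro i
  fin_cases i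
  · exact h _ hg' 0
  · exact h _ hg' 2
  · exact h _ hg' 1

private lemma snoc_eq (a b c : L) : (Fin.snoc ![a, b] c : Fin 3 → L) = ![a, b, c] := by
  funext i; fin_cases i <;> simp [Fin.snoc] <;> rfl

private lemma build (hdim : Module.finrank F L = 3) {a : Fin 3 → L}
    (hli : LinearIndependent F a) :
    ∃ b : Basis (Fin 3) F L, ⇑b = a :=
  ⟨basisOfLinearIndependentOfCardEqFinrank hli (by simp [hdim]),
    coe_basisOfLinearIndependentOfCardEqFinrank _ _⟩

private lemma brkt {β : L →ₗ[F] L →ₗ[F] L} {a1 a2 a3 : L} {α γ δ : F}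
    (h11 : β a1 a1 = a3) (h12 : β a1 a2 = α • a3) (h21 : β a2 a1 = γ • a3)
    (h22 : β a2 a2 = δ • a3) (s t : F) :
    β a1 (s • a2 + t • a1) = (s * α + t) • a3 ∧
    β (s • a2 + t • a1) a1 = (s * γ + t) • a3 ∧
    β (s • a2 + t • a1) (s • a2 + t • a1) = (s ^ 2 * δ + s * t * (α + γ) + t ^ 2) • a3 := by
  refine ⟨?_, ?_, ?_⟩ <;>
    simp only [map_add, map_smul, LinearMap.add_apply, LinearMap.smul_apply,
      h11, h12, h21, h22] <;> module

end Helpers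

theorem stmt1 (β : L →ₗ[F] L →ₗ[F] L) (hLeib : IsLeibniz β)
    (hdim : finrank F L = 3) (hnotLie : ∃ a : L, β a a ≠ 0)
    (hsub : leibKer β ≤ lzCenter β) (hk : finrank F (leibKer β) = 1)
    (hab : ∀ a b : L, β a b ∈ leibKer β) :
    ∃ b : Basis (Fin 3) F L,
      MulTbl β ⇑b ![![b 2, 0, 0], ![0, 0, 0], ![0, 0, 0]] ∨
      MulTbl β ⇑b ![![b 2, b 2, 0], ![0, 0, 0], ![0, 0, 0]] ∨
      MulTbl β ⇑b ![![b 2, 0, 0], ![b 2, 0, 0], ![0, 0, 0]] ∨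
      (∃ α : F, α ≠ 0 ∧ MulTbl β ⇑b ![![b 2, α • b 2, 0], ![b 2, 0, 0], ![0, 0, 0]]) ∨
      (∃ β' : F, β' ≠ 0 ∧ (∀ x : F, x ^ 2 + β' ≠ 0) ∧
        MulTbl β ⇑b ![![b 2, 0, 0], ![0, β' • b 2, 0], ![0, 0, 0]]) ∨
      (∃ α β' : F, α ≠ 0 ∧ β' ≠ 0 ∧ (∀ x : F, x ^ 2 + α * x + β' ≠ 0) ∧
        MulTbl β ⇑b ![![b 2, α • b 2, 0], ![0, β' • b 2, 0], ![0, 0, 0]]) ∨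
      (∃ σ : F, σ ≠ 0 ∧ (∀ x : F, x ^ 2 + x + σ ≠ 0) ∧
        MulTbl β ⇑b ![![b 2, 0, 0], ![b 2, σ • b 2, 0], ![0, 0, 0]]) ∨
      (∃ τ σ : F, τ ≠ 0 ∧ σ ≠ 0 ∧ (∀ x : F, x ^ 2 + (τ + 1) * x + σ ≠ 0) ∧
        MulTbl β ⇑b ![![b 2, τ • b 2, 0], ![b 2, σ • b 2, 0], ![0, 0, 0]]) := by
  have hFD : FiniteDimensional F L := FiniteDimensional.of_finrank_pos (by rw [hdim]; norm_num)
  obtain ⟨a1, ha1⟩ := hnotLie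
  set c := β a1 a1 with hcdef
  have h11 : β a1 a1 = c := hcdef.symm
  have hcK : c ∈ leibKer β := Submodule.subset_span ⟨a1, rfl⟩
  have hker : leibKer β = Submodule.span F {c} := by
    refine (Submodule.eq_of_le_of_finrank_eq ?_ ?_).symm
    · rwa [Submodule.span_le, Set.singleton_subset_iff]
    · rw [finrank_span_singleton ha1, hk]
  have hcc : c ∈ lzCenter β := hsub hcK
  have hzl : ∀ y, β c y = 0 := fun y => (hcc y).1
  have hzr : ∀ y, β y c = 0 := fun y => (hcc y).2
  have hscal : ∀ x y : L, ∃ s : F, β x y = s • c := by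
    intro x y
    have hm := hab x y
    rw [hker, Submodule.mem_span_singleton] at hm
    obtain ⟨s, hs⟩ := hm
    exact ⟨s, hs.symm⟩
  have hli2 : LinearIndependent F ![a1, c] := by
    rw [LinearIndependent.pair_iff]
    intro s t hst
    have h1 : s • c = 0 := by
      have h1 : β (s • a1 + t • c) a1 = 0 := by rw [hst]; simp
      simpa [map_add, map_smul, LinearMap.add_apply, LinearMap.smul_apply, hzl, h11] using h1
    have hs0 : s = 0 := by
      rcases smul_eq_zero.mp h1 with h | h
      · exact h
      · exact absurd h ha1
    have ht : t • c = 0 := by rwa [hs0, zero_smul, zero_add] at hst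
    have ht0 : t = 0 := by
      rcases smul_eq_zero.mp ht with h | h
      · exact h
      · exact absurd h ha1
    exact ⟨hs0, ht0⟩
  obtain ⟨a2, hsnoc⟩ :=
    exists_linearIndependent_snoc_of_lt_finrank hli2 (by rw [hdim]; norm_num)
  rw [snoc_eq] at hsnoc
  have hli : LinearIndependent F ![a1, a2, c] := li_perm hsnoc
  obtain ⟨α, h12⟩ := hscal a1 a2
  obtain ⟨γ, h21⟩ := hscal a2 a1
  obtain ⟨δ, h22⟩ := hscal a2 a2
  by_cases hroot : ∃ t : F, t ^ 2 + (α + γ) * t + δ = 0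
  · -- a root exists: we can make δ = 0
    obtain ⟨t, ht⟩ := hroot
    by_cases hγ' : γ + t = 0
    · by_cases hα' : α + t = 0
      · -- table (i)
        have hli' : LinearIndependent F ![a1, a2 + t • a1, c] := by
          simpa using li_change hli 1 t one_ne_zero
        obtain ⟨b, hb⟩ := build hdim hli'
        have e12 : β a1 (a2 + t • a1) = 0 := by
          have h := (brkt h11 h12 h21 h22 1 t).1
          rw [one_smul] at h
          rw [h, show (1 : F) * α + t = 0 by rw [one_mul]; exact hα', zero_smul]
        have e21 : β (a2 + t • a1) a1 = 0 := by
          have h := (brkt h11 h12 h21 h22 1 t).2.1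
          rw [one_smul] at h
          rw [h, show (1 : F) * γ + t = 0 by rw [one_mul]; exact hγ', zero_smul]
        have e22 : β (a2 + t • a1) (a2 + t • a1) = 0 := by
          have h := (brkt h11 h12 h21 h22 1 t).2.2
          rw [one_smul] at h
          rw [h, show (1 : F) ^ 2 * δ + 1 * t * (α + γ) + t ^ 2 = 0 by linear_combination ht,
            zero_smul]
        refine ⟨b, Or.inl ?_⟩
        intro i j
        fin_cases i <;> fin_cases j <;>
          simp [hb, h11, e12, e21, e22, hzl, hzr, Matrix.vecHead, Matrix.vecTail, -map_add, -map_smul, -LinearMap.map_smul, -LinearMap.map_smulₛₗ, -LinearMap.map_smul_of_tower, -map_smulₛₗ, -LinearMap.map_add, -LinearMap.add_apply, -LinearMap.smul_apply]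
      · -- table (ii)
        set s := (α + t)⁻¹ with hsdef
        have hs : s ≠ 0 := inv_ne_zero hα'
        have hli' : LinearIndependent F ![a1, s • a2 + (s * t) • a1, c] :=
          li_change hli s (s * t) hs
        obtain ⟨b, hb⟩ := build hdim hli'
        have e12 : β a1 (s • a2 + (s * t) • a1) = c := by
          rw [(brkt h11 h12 h21 h22 s (s * t)).1,
            show s * α + s * t = 1 by rw [hsdef]; field_simp, one_smul]
        have e21 : β (s • a2 + (s * t) • a1) a1 = 0 := by
          rw [(brkt h11 h12 h21 h22 s (s * t)).2.1,
            show s * γ + s * t = 0 by linear_combination s * hγ', zero_smul]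
        have e22 : β (s • a2 + (s * t) • a1) (s • a2 + (s * t) • a1) = 0 := by
          rw [(brkt h11 h12 h21 h22 s (s * t)).2.2,
            show s ^ 2 * δ + s * (s * t) * (α + γ) + (s * t) ^ 2 = 0 by
              linear_combination s ^ 2 * ht, zero_smul]
        refine ⟨b, Or.inr <| Or.inl ?_⟩
        intro i j
        fin_cases i <;> fin_cases j <;>
          simp [hb, h11, e12, e21, e22, hzl, hzr, Matrix.vecHead, Matrix.vecTail, -map_add, -map_smul, -LinearMap.map_smul, -LinearMap.map_smulₛₗ, -LinearMap.map_smul_of_tower, -map_smulₛₗ, -LinearMap.map_add, -LinearMap.add_apply, -LinearMap.smul_apply]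
    · -- γ + t ≠ 0 : tables (iii)/(iv)
      set s := (γ + t)⁻¹ with hsdef
      have hs : s ≠ 0 := inv_ne_zero hγ'
      have hli' : LinearIndependent F ![a1, s • a2 + (s * t) • a1, c] :=
        li_change hli s (s * t) hs
      obtain ⟨b, hb⟩ := build hdim hli'
      have e21 : β (s • a2 + (s * t) • a1) a1 = c := by
        rw [(brkt h11 h12 h21 h22 s (s * t)).2.1,
          show s * γ + s * t = 1 by rw [hsdef]; field_simp, one_smul]
      have e22 : β (s • a2 + (s * t) • a1) (s • a2 + (s * t) • a1) = 0 := by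
        rw [(brkt h11 h12 h21 h22 s (s * t)).2.2,
          show s ^ 2 * δ + s * (s * t) * (α + γ) + (s * t) ^ 2 = 0 by
            linear_combination s ^ 2 * ht, zero_smul]
      have e12 : β a1 (s • a2 + (s * t) • a1) = (s * (α + t)) • c := by
        rw [(brkt h11 h12 h21 h22 s (s * t)).1]
        congr 1
        ring
      by_cases hα' : α + t = 0
      · -- table (iii)
        have e12' : β a1 (s • a2 + (s * t) • a1) = 0 := by
          rw [e12, hα', mul_zero, zero_smul]
        refine ⟨b, Or.inr <| Or.inr <| Or.inl ?_⟩
        intro i j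
        fin_cases i <;> fin_cases j <;>
          simp [hb, h11, e12', e21, e22, hzl, hzr, Matrix.vecHead, Matrix.vecTail, -map_add, -map_smul, -LinearMap.map_smul, -LinearMap.map_smulₛₗ, -LinearMap.map_smul_of_tower, -map_smulₛₗ, -LinearMap.map_add, -LinearMap.add_apply, -LinearMap.smul_apply]
      · -- table (iv)
        refine ⟨b, Or.inr <| Or.inr <| Or.inr <| Or.inl
          ⟨s * (α + t), mul_ne_zero hs hα', ?_⟩⟩
        intro i j
        fin_cases i <;> fin_cases j <;>
          simp [hb, h11, e12, e21, e22, hzl, hzr, Matrix.vecHead, Matrix.vecTail, -map_add, -map_smul, -LinearMap.map_smul, -LinearMap.map_smulₛₗ, -LinearMap.map_smul_of_tower, -map_smulₛₗ, -LinearMap.map_add, -LinearMap.add_apply, -LinearMap.smul_apply]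
  · -- no root : tables (v)-(viii)
    push_neg at hroot
    have hδ : δ ≠ 0 := by
      intro h
      exact hroot 0 (by rw [h]; ring)
    by_cases hγ : γ = 0
    · by_cases hα : α = 0
      · -- table (v)
        obtain ⟨b, hb⟩ := build hdim hli
        have e12 : β a1 a2 = 0 := by rw [h12, hα, zero_smul]
        have e21 : β a2 a1 = 0 := by rw [h21, hγ, zero_smul]
        refine ⟨b, Or.inr <| Or.inr <| Or.inr <| Or.inr <| Or.inl
          ⟨δ, hδ, ?_, ?_⟩⟩
        · intro x hx
          exact hroot x (by rw [hα, hγ]; linear_combination hx)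
        · intro i j
          fin_cases i <;> fin_cases j <;>
            simp [hb, h11, e12, e21, h22, hzl, hzr, Matrix.vecHead, Matrix.vecTail, -map_add, -map_smul, -LinearMap.map_smul, -LinearMap.map_smulₛₗ, -LinearMap.map_smul_of_tower, -map_smulₛₗ, -LinearMap.map_add, -LinearMap.add_apply, -LinearMap.smul_apply]
      · -- table (vi)
        obtain ⟨b, hb⟩ := build hdim hli
        have e21 : β a2 a1 = 0 := by rw [h21, hγ, zero_smul]
        refine ⟨b, Or.inr <| Or.inr <| Or.inr <| Or.inr <| Or.inr <| Or.inl
          ⟨α, δ, hα, hδ, ?_, ?_⟩⟩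
        · intro x hx
          exact hroot x (by rw [hγ]; linear_combination hx)
        · intro i j
          fin_cases i <;> fin_cases j <;>
            simp [hb, h11, h12, e21, h22, hzl, hzr, Matrix.vecHead, Matrix.vecTail, -map_add, -map_smul, -LinearMap.map_smul, -LinearMap.map_smulₛₗ, -LinearMap.map_smul_of_tower, -map_smulₛₗ, -LinearMap.map_add, -LinearMap.add_apply, -LinearMap.smul_apply]
    · -- γ ≠ 0 : tables (vii)/(viii)
      have hli' : LinearIndependent F ![a1, γ⁻¹ • a2, c] := by
        simpa using li_change hli γ⁻¹ 0 (inv_ne_zero hγ)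
      obtain ⟨b, hb⟩ := build hdim hli'
      have e12 : β a1 (γ⁻¹ • a2) = (γ⁻¹ * α) • c := by
        simp [h12, smul_smul]
      have e21 : β (γ⁻¹ • a2) a1 = c := by
        simp [h21, smul_smul, inv_mul_cancel₀ hγ]
      have e22 : β (γ⁻¹ • a2) (γ⁻¹ • a2) = (γ⁻¹ * (γ⁻¹ * δ)) • c := by
        simp [h22, smul_smul]
      have hσ : γ⁻¹ * (γ⁻¹ * δ) ≠ 0 :=
        mul_ne_zero (inv_ne_zero hγ) (mul_ne_zero (inv_ne_zero hγ) hδ)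
      have hcond : ∀ x : F, x ^ 2 + (γ⁻¹ * α + 1) * x + γ⁻¹ * (γ⁻¹ * δ) ≠ 0 := by
        intro x hx
        apply hroot (γ * x)
        have key : (γ * x) ^ 2 + (α + γ) * (γ * x) + δ =
            γ ^ 2 * (x ^ 2 + (γ⁻¹ * α + 1) * x + γ⁻¹ * (γ⁻¹ * δ)) := by
          field_simp
        rw [key, hx, mul_zero]
      by_cases hα : α = 0
      · -- table (vii)
        have hτ0 : γ⁻¹ * α = 0 := by rw [hα, mul_zero]
        have e12' : β a1 (γ⁻¹ • a2) = 0 := by rw [e12, hτ0, zero_smul]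
        refine ⟨b, Or.inr <| Or.inr <| Or.inr <| Or.inr <| Or.inr <| Or.inr <| Or.inl
          ⟨γ⁻¹ * (γ⁻¹ * δ), hσ, ?_, ?_⟩⟩
        · intro x
          have h := hcond x
          rw [hτ0] at h
          simpa using h
        · intro i j
          fin_cases i <;> fin_cases j <;>
            simp [hb, h11, e12', e21, e22, hzl, hzr, Matrix.vecHead, Matrix.vecTail, -map_add, -map_smul, -LinearMap.map_smul, -LinearMap.map_smulₛₗ, -LinearMap.map_smul_of_tower, -map_smulₛₗ, -LinearMap.map_add, -LinearMap.add_apply, -LinearMap.smul_apply]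
      · -- table (viii)
        refine ⟨b, Or.inr <| Or.inr <| Or.inr <| Or.inr <| Or.inr <| Or.inr <| Or.inr
          ⟨γ⁻¹ * α, γ⁻¹ * (γ⁻¹ * δ), mul_ne_zero (inv_ne_zero hγ) hα, hσ, hcond, ?_⟩⟩
        intro i j
        fin_cases i <;> fin_cases j <;>
          simp [hb, h11, e12, e21, e22, hzl, hzr, Matrix.vecHead, Matrix.vecTail, -map_add, -map_smul, -LinearMap.map_smul, -LinearMap.map_smulₛₗ, -LinearMap.map_smul_of_tower, -map_smulₛₗ, -LinearMap.map_add, -LinearMap.add_apply, -LinearMap.smul_apply]
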